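/- Error bound under perturbed initialization: suppose W₁ = AᵀP + C with AC = 0, and AW₁W₂⋯W_h x = b. Then AᵀP W₂⋯W_h x = θ* (the minimum norm solution), and ‖W₁W₂⋯W_h x − θ*‖ = ‖CW₂⋯W_h x‖ ≤ ‖W₂‖⋯‖W_h‖·‖x‖·‖C‖, where ‖·‖ on matrices is the operator norm. -/

import Mathlib

open Matrix

/-- The Euclidean norm of a vector in `Fin d → ℝ`. -/
noncomputable def eNorm {d : ℕ} (v : Fin d → ℝ) : ℝ :=
  ‖(WithLp.equiv 2 (Fin d → ℝ)).symm v‖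

/-- The ℓ²→ℓ² operator (spectral) norm of a real matrix. -/
noncomputable def l2OpNorm {m p : ℕ} (M : Matrix (Fin m) (Fin p) ℝ) : ℝ :=
  ‖LinearMap.toContinuousLinearMap (Matrix.toEuclideanLin M)‖

lemma l2OpNorm_nonneg {m p : ℕ} (M : Matrix (Fin m) (Fin p) ℝ) : 0 ≤ l2OpNorm M :=
  norm_nonneg _

lemma eNorm_nonneg {d : ℕ} (v : Fin d → ℝ) : 0 ≤ eNorm v := norm_nonneg _

lemma eNorm_mulVec_le {m p : ℕ} (M : Matrix (Fin m) (Fin p) ℝ) (v : Fin p → ℝ) :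
    eNorm (M.mulVec v) ≤ l2OpNorm M * eNorm v := by
  have h := (LinearMap.toContinuousLinearMap (Matrix.toEuclideanLin M)).le_opNorm
    ((WithLp.equiv 2 (Fin p → ℝ)).symm v)
  rw [LinearMap.coe_toContinuousLinearMap'] at h
  change eNorm (M.mulVec v) ≤ l2OpNorm M * eNorm v at h
  exact h

lemma eNorm_listProd_mulVec_le {d : ℕ} (l : List (Matrix (Fin d) (Fin d) ℝ))
    (v : Fin d → ℝ) :
    eNorm (l.prod.mulVec v) ≤ (l.map l2OpNorm).prod * eNorm v := by
  induction l with
  | nil => simp [Matrix.one_mulVec]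
  | cons a t ih =>
    have h1 : (a :: t).prod.mulVec v = a.mulVec (t.prod.mulVec v) := by
      rw [List.prod_cons, ← Matrix.mulVec_mulVec]
    rw [h1, List.map_cons, List.prod_cons, mul_assoc]
    calc eNorm (a.mulVec (t.prod.mulVec v))
        ≤ l2OpNorm a * eNorm (t.prod.mulVec v) := eNorm_mulVec_le _ _
      _ ≤ l2OpNorm a * ((t.map l2OpNorm).prod * eNorm v) :=
          mul_le_mul_of_nonneg_left ih (l2OpNorm_nonneg a)

theorem stmt_16 {n d h : ℕ} (hnd : n ≤ d) (hh : 1 ≤ h)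
    (A : Matrix (Fin n) (Fin d) ℝ) (hrank : A.rank = n) (b : Fin n → ℝ)
    (θstar : Fin d → ℝ) (hθstar : θstar = Aᵀ.mulVec ((A * Aᵀ)⁻¹.mulVec b))
    (W₁ : Matrix (Fin d) (Fin d) ℝ)
    -- `W i` for `i : Fin (h-1)` plays the role of `W_{i+2}`; `B = W₂ ⋯ W_h`.
    (W : Fin (h - 1) → Matrix (Fin d) (Fin d) ℝ)
    (B : Matrix (Fin d) (Fin d) ℝ) (hB : B = (List.ofFn W).prod)
    (x : Fin d → ℝ)
    (P : Matrix (Fin n) (Fin d) ℝ) (C : Matrix (Fin d) (Fin d) ℝ)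
    (hW₁ : W₁ = Aᵀ * P + C) (hC : A * C = 0)
    (hsol : A.mulVec ((W₁ * B).mulVec x) = b) :
    (Aᵀ * P * B).mulVec x = θstar ∧
    eNorm ((W₁ * B).mulVec x - θstar) = eNorm ((C * B).mulVec x) ∧
    eNorm ((C * B).mulVec x) ≤ (∏ i, l2OpNorm (W i)) * eNorm x * l2OpNorm C := by
  -- A * Aᵀ is invertible
  have hrankAAT : (A * Aᵀ).rank = n := by
    rw [Matrix.rank_self_mul_transpose, hrank]
  have hUnit : IsUnit (A * Aᵀ) := by
    rw [← Matrix.mulVec_surjective_iff_isUnit]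
    have hrange : LinearMap.range (A * Aᵀ).mulVecLin = ⊤ := by
      apply Submodule.eq_top_of_finrank_eq
      rw [show Module.finrank ℝ (LinearMap.range (A * Aᵀ).mulVecLin) = (A * Aᵀ).rank from rfl,
        hrankAAT]
      simp [Module.finrank_pi]
    intro y
    have : y ∈ LinearMap.range (A * Aᵀ).mulVecLin := hrange ▸ Submodule.mem_top
    obtain ⟨z, hz⟩ := this
    exact ⟨z, hz⟩
  -- key: (A*Aᵀ).mulVec ((P*B).mulVec x) = b
  have hkey : (A * Aᵀ).mulVec ((P * B).mulVec x) = b := by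
    have : A.mulVec ((W₁ * B).mulVec x) = (A * Aᵀ * (P * B)).mulVec x := by
      rw [Matrix.mulVec_mulVec, hW₁]
      have heq : A * ((Aᵀ * P + C) * B) = A * Aᵀ * (P * B) := by
        rw [Matrix.add_mul, Matrix.mul_add, ← Matrix.mul_assoc A C B, hC, Matrix.zero_mul,
          add_zero, Matrix.mul_assoc Aᵀ P B, ← Matrix.mul_assoc A Aᵀ (P * B)]
      rw [heq]
    rw [this, ← Matrix.mulVec_mulVec] at hsol
    exact hsol
  have hinvb : (A * Aᵀ)⁻¹.mulVec b = (P * B).mulVec x := by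
    rw [← hkey, Matrix.mulVec_mulVec, Matrix.nonsing_inv_mul _ ((Matrix.isUnit_iff_isUnit_det _).mp hUnit), Matrix.one_mulVec]
  have hpart1 : (Aᵀ * P * B).mulVec x = θstar := by
    rw [hθstar, hinvb, Matrix.mulVec_mulVec, Matrix.mul_assoc]
  refine ⟨hpart1, ?_, ?_⟩
  · congr 1
    rw [← hpart1, hW₁, Matrix.add_mul, Matrix.add_mulVec]
    abel
  · calc eNorm ((C * B).mulVec x)
        = eNorm (C.mulVec (B.mulVec x)) := by rw [← Matrix.mulVec_mulVec]
      _ ≤ l2OpNorm C * eNorm (B.mulVec x) := eNorm_mulVec_le _ _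
      _ ≤ l2OpNorm C * ((∏ i, l2OpNorm (W i)) * eNorm x) := by
          apply mul_le_mul_of_nonneg_left _ (l2OpNorm_nonneg C)
          have := eNorm_listProd_mulVec_le (List.ofFn W) x
          rw [hB]
          calc eNorm ((List.ofFn W).prod.mulVec x)
              ≤ ((List.ofFn W).map l2OpNorm).prod * eNorm x := this
            _ = (∏ i, l2OpNorm (W i)) * eNorm x := by
                rw [List.map_ofFn, List.prod_ofFn]; rfl
      _ = (∏ i, l2OpNorm (W i)) * eNorm x * l2OpNorm C := by ring
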